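/- Let (Ω, F, P) support independent random variables U and θ, where U is uniformly distributed on [0,1] and P[θ = −1] = 1/2 = P[θ = 1]. Let F_0 = {∅, Ω}, F_1 = σ(U), and F_t = σ(U, θ) for t ∈ ℕ, t ≥ 2. Define S′_t = (1_{{U > 1/2}} − 1_{{U < 1/2}}) · 1_{{t ≥ 1}} + (θ/U) · 1_{{t ≥ 2}} and Z_t = 1_{{t = 0}} + 2U · 1_{{t ≥ 1}}. Then S′ is a P–local martingale and a P–generalized martingale, but E_P[Z_1 S′_1] = 1/2 ≠ 0 = E_P[Z_0 S′_0]; hence the product process (Z_t S′_t)_{t∈ℕ₀} is not a P–martingale. -/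

import Mathlib

open MeasureTheory Filter Set ENNReal
open scoped Classical

noncomputable section

/-- Generalized conditional expectation `E[Y | G]` of a nonnegative random variable `Y`,
defined as the (a.s. monotone) limit `lim_k E[Y ∧ k | G]`, with values in `ℝ≥0∞`. -/
noncomputable def gce {Ω : Type*} {m0 : MeasurableSpace Ω} (G : MeasurableSpace Ω)
    (μ : @Measure Ω m0) (Y : Ω → ℝ) : Ω → ℝ≥0∞ :=
  fun ω => ⨆ k : ℕ, ENNReal.ofReal ((μ[fun ω' => min (Y ω') (k : ℝ)|G]) ω)

/-- Generalized conditional expectation `E[W | G] = E[W⁺ | G] - E[W⁻ | G]` of a real random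
variable `W` (meaningful when `E[|W| | G] < ∞` a.s.). -/
noncomputable def gcondexp {Ω : Type*} {m0 : MeasurableSpace Ω} (G : MeasurableSpace Ω)
    (μ : @Measure Ω m0) (W : Ω → ℝ) : Ω → ℝ :=
  fun ω => (@gce Ω m0 G μ (fun ω' => max (W ω') 0) ω).toReal
    - (@gce Ω m0 G μ (fun ω' => max (-(W ω')) 0) ω).toReal

/-- A (possibly infinite) stopping time for a discrete-time filtration. -/
def IsStoppingTimeE {Ω : Type*} [m0 : MeasurableSpace Ω] (ℱ : Filtration ℕ m0)
    (τ : Ω → ℕ∞) : Prop :=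
  ∀ n : ℕ, MeasurableSet[ℱ n] {ω | τ ω ≤ (n : ℕ∞)}

/-- The stopped process `S^τ 1_{τ > 0}`. -/
noncomputable def stoppedAt {Ω E : Type*} [Zero E] (S : ℕ → Ω → E) (τ : Ω → ℕ∞) :
    ℕ → Ω → E :=
  fun t ω => if 0 < τ ω then S ((min (t : ℕ∞) (τ ω)).toNat) ω else 0

/-- A discrete-time `d`-dimensional process `S` is a local martingale if it is adapted and
there exist stopping times `τ n → ∞` a.s. such that each stopped process
`S^{τ n} 1_{τ n > 0}` is a martingale. -/
def IsLocalMartingale {Ω E : Type*} [m0 : MeasurableSpace Ω]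
    [NormedAddCommGroup E] [NormedSpace ℝ E] [CompleteSpace E]
    (ℱ : Filtration ℕ m0) (μ : Measure Ω) (S : ℕ → Ω → E) : Prop :=
  StronglyAdapted ℱ S ∧ ∃ τ : ℕ → Ω → ℕ∞,
    (∀ n, IsStoppingTimeE ℱ (τ n)) ∧
    (∀ᵐ ω ∂μ, ∀ M : ℕ, ∀ᶠ n in atTop, (M : ℕ∞) ≤ τ n ω) ∧
    (∀ n, Martingale (stoppedAt S (τ n)) ℱ μ)

lemma iSup_ofReal_min (a : ℝ) :
    (⨆ k : ℕ, ENNReal.ofReal (min a k)) = ENNReal.ofReal a := by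
  apply le_antisymm
  · exact iSup_le fun k => ENNReal.ofReal_le_ofReal (min_le_left _ _)
  · obtain ⟨k, hk⟩ := exists_nat_ge a
    exact le_iSup_of_le k (by rw [min_eq_left hk])

lemma iSup_ofReal_min2 (a b : ℝ) :
    (⨆ k : ℕ, ENNReal.ofReal ((min a k + min b k) / 2)) = ENNReal.ofReal ((a + b) / 2) := by
  apply le_antisymm
  · refine iSup_le fun k => ENNReal.ofReal_le_ofReal ?_
    gcongr <;> [exact min_le_left _ _; exact min_le_left _ _]
  · obtain ⟨k, hk⟩ := exists_nat_ge (max a b)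
    refine le_iSup_of_le k ?_
    rw [min_eq_left ((le_max_left a b).trans hk), min_eq_left ((le_max_right a b).trans hk)]

lemma gce_ae_eq {Ω : Type*} {m0 : MeasurableSpace Ω} {G : MeasurableSpace Ω} {μ : @Measure Ω m0}
    {Y : Ω → ℝ} {φ : ℕ → Ω → ℝ} {c : Ω → ℝ}
    (h : ∀ k : ℕ, (μ[fun ω' => min (Y ω') (k : ℝ)|G]) =ᵐ[μ] φ k)
    (h2 : ∀ ω, (⨆ k : ℕ, ENNReal.ofReal (φ k ω)) = ENNReal.ofReal (c ω)) :
    (fun ω => gce G μ Y ω) =ᵐ[μ] fun ω => ENNReal.ofReal (c ω) := by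
  filter_upwards [ae_all_iff.2 h] with ω hω
  simp only [gce]
  rw [← h2 ω]
  exact iSup_congr fun k => by rw [hω k]

/-- **Example (continued).** With the same setup,
`S'_t = (1_{U > 1/2} - 1_{U < 1/2}) 1_{t ≥ 1} + (θ/U) 1_{t ≥ 2}` and
`Z_t = 1_{t = 0} + 2U 1_{t ≥ 1}`: `S'` is a local martingale and a generalized martingale,
but `E[Z_1 S'_1] = 1/2 ≠ 0 = E[Z_0 S'_0]`, hence `Z S'` is not a martingale. -/
theorem stmt17 {Ω : Type*} {m0 : MeasurableSpace Ω} (P : Measure Ω) [IsProbabilityMeasure P]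
    (U θ : Ω → ℝ) (hU : Measurable U) (hθ : Measurable θ)
    (hindep : ProbabilityTheory.IndepFun U θ P)
    (hUlaw : P.map U = MeasureTheory.volume.restrict (Set.Icc (0 : ℝ) 1))
    (hθm : P {ω | θ ω = -1} = 1 / 2) (hθp : P {ω | θ ω = 1} = 1 / 2)
    (ℱ : Filtration ℕ m0)
    (hF0 : (ℱ 0 : MeasurableSpace Ω) = ⊥)
    (hF1 : (ℱ 1 : MeasurableSpace Ω) = MeasurableSpace.comap U Real.measurableSpace)
    (hFt : ∀ t, 2 ≤ t → (ℱ t : MeasurableSpace Ω) =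
      MeasurableSpace.comap U Real.measurableSpace ⊔
        MeasurableSpace.comap θ Real.measurableSpace)
    (S' : ℕ → Ω → ℝ)
    (hS'def : ∀ t ω, S' t ω =
      (if 1 ≤ t then
        ((if 1 / 2 < U ω then (1 : ℝ) else 0) - (if U ω < 1 / 2 then 1 else 0)) else 0) +
      (if 2 ≤ t then θ ω / U ω else 0))
    (Z : ℕ → Ω → ℝ) (hZdef : ∀ t ω, Z t ω = if t = 0 then 1 else 2 * U ω) :
    IsLocalMartingale ℱ P S' ∧
    (∀ t : ℕ,
      (∀ᵐ ω ∂P, gce (ℱ t) P (fun ω' => |S' (t + 1) ω'|) ω < ⊤) ∧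
      (∀ᵐ ω ∂P, gcondexp (ℱ t) P (S' (t + 1)) ω = S' t ω)) ∧
    (∫ ω, Z 1 ω * S' 1 ω ∂P = 1 / 2) ∧
    (∫ ω, Z 0 ω * S' 0 ω ∂P = 0) ∧
    ¬ Martingale (fun t ω => Z t ω * S' t ω) ℱ P := by
  -- abbreviations
  have hUm1 : Measurable[ℱ 1] U := by rw [hF1]; exact comap_measurable U
  have hA1 : MeasurableSet[ℱ 1] {ω | 1/2 < U ω} := hUm1 measurableSet_Ioi
  have hB1 : MeasurableSet[ℱ 1] {ω | U ω < 1/2} := hUm1 measurableSet_Iio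
  set sfun : Ω → ℝ :=
    fun ω => (if 1/2 < U ω then (1:ℝ) else 0) - (if U ω < 1/2 then 1 else 0) with hsfun_def
  have hS0 : ∀ ω, S' 0 ω = 0 := fun ω => by simp [hS'def]
  have hS1 : ∀ ω, S' 1 ω = sfun ω := fun ω => by simp [hS'def, hsfun_def]
  have hSt : ∀ t, 2 ≤ t → ∀ ω, S' t ω = sfun ω + θ ω / U ω := fun t ht ω => by
    have h1 : 1 ≤ t := le_trans (by norm_num) ht
    simp [hS'def, ht, h1, hsfun_def]
  have hsfun1 : Measurable[ℱ 1] sfun :=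
    ((measurable_const.ite hA1 measurable_const).sub
      (measurable_const.ite hB1 measurable_const))
  have hsfun_abs : ∀ ω, |sfun ω| ≤ 1 := by
    intro ω
    simp only [hsfun_def]
    split_ifs <;> norm_num
  have hsfun_m0 : Measurable sfun := hsfun1.mono (ℱ.le 1) le_rfl
  -- law computations
  have hmap : ∀ s : Set ℝ, MeasurableSet s → P (U ⁻¹' s) = volume (s ∩ Icc 0 1) := by
    intro s hs
    rw [← Measure.map_apply hU hs, hUlaw, Measure.restrict_apply hs]
  have hPA : P {ω | 1/2 < U ω} = 1/2 := by
    have : {ω | 1/2 < U ω} = U ⁻¹' (Ioi (1/2)) := rfl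
    rw [this, hmap _ measurableSet_Ioi]
    have : Ioi ((1:ℝ)/2) ∩ Icc 0 1 = Ioc (1/2) 1 := by
      ext x; simp only [mem_inter_iff, mem_Ioi, mem_Icc, mem_Ioc]
      constructor <;> intro h
      · exact ⟨h.1, h.2.2⟩
      · exact ⟨h.1, by linarith [h.1], h.2⟩
    rw [this, Real.volume_Ioc, show (1:ℝ) - 1/2 = 1/2 by norm_num,
      ENNReal.ofReal_div_of_pos (by norm_num)]
    norm_num
  have hPB : P {ω | U ω < 1/2} = 1/2 := by
    have : {ω | U ω < 1/2} = U ⁻¹' (Iio (1/2)) := rfl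
    rw [this, hmap _ measurableSet_Iio]
    have : Iio ((1:ℝ)/2) ∩ Icc 0 1 = Ico 0 (1/2) := by
      ext x; simp only [mem_inter_iff, mem_Iio, mem_Icc, mem_Ico]
      constructor <;> intro h
      · exact ⟨h.2.1, h.1⟩
      · exact ⟨h.2, h.1, by linarith [h.2]⟩
    rw [this, Real.volume_Ico, show (1:ℝ)/2 - 0 = 1/2 by norm_num,
      ENNReal.ofReal_div_of_pos (by norm_num)]
    norm_num
  have hUpos : ∀ᵐ ω ∂P, 0 < U ω := by
    rw [ae_iff]
    have : {ω | ¬ 0 < U ω} = U ⁻¹' (Iic 0) := by ext ω; simp [not_lt]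
    rw [this, hmap _ measurableSet_Iic]
    have : Iic (0:ℝ) ∩ Icc 0 1 = {0} := by
      ext x; simp only [mem_inter_iff, mem_Iic, mem_Icc, mem_singleton_iff]
      constructor <;> intro h
      · linarith [h.1, h.2.1]
      · subst h; norm_num
    rw [this, Real.volume_singleton]
  -- θ facts
  have hθ1meas : MeasurableSet {ω | θ ω = 1} := hθ (measurableSet_singleton 1)
  have hθmmeas : MeasurableSet {ω | θ ω = -1} := hθ (measurableSet_singleton (-1))
  have hθae : ∀ᵐ ω ∂P, θ ω = 1 ∨ θ ω = -1 := by
    rw [ae_iff]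
    have hdisj : Disjoint {ω | θ ω = 1} {ω | θ ω = -1} := by
      rw [Set.disjoint_left]; intro ω h1 h2
      simp only [mem_setOf_eq] at h1 h2
      rw [h1] at h2; norm_num at h2
    have hu : P ({ω | θ ω = 1} ∪ {ω | θ ω = -1}) = 1 := by
      rw [measure_union hdisj hθmmeas, hθp, hθm]
      rw [ENNReal.div_add_div_same, one_add_one_eq_two,
        ENNReal.div_self (by norm_num) (by norm_num)]
    have hcompl : {ω | ¬(θ ω = 1 ∨ θ ω = -1)} = ({ω | θ ω = 1} ∪ {ω | θ ω = -1})ᶜ := by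
      ext ω; simp [not_or]
    rw [hcompl, measure_compl (hθ1meas.union hθmmeas) (measure_ne_top _ _), hu, measure_univ]
    simp
  have hθint : Integrable θ P := by
    refine Integrable.mono' (integrable_const 1) hθ.aestronglyMeasurable ?_
    filter_upwards [hθae] with ω hω
    rcases hω with h | h <;> simp [h]
  have hEθ : ∫ ω, θ ω ∂P = 0 := by
    have hcongr : θ =ᵐ[P] fun ω => ({ω | θ ω = 1}.indicator (fun _ => (1:ℝ)) ω
        - {ω | θ ω = -1}.indicator (fun _ => (1:ℝ)) ω) := by
      filter_upwards [hθae] with ω hω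
      rcases hω with h | h
      · rw [Set.indicator_of_mem (by exact h),
          Set.indicator_of_notMem (by simp only [mem_setOf_eq, h]; norm_num)]
        rw [h]; ring
      · rw [Set.indicator_of_notMem (by simp only [mem_setOf_eq, h]; norm_num),
          Set.indicator_of_mem (by exact h)]
        rw [h]; ring
    rw [integral_congr_ae hcongr, integral_sub
      ((integrable_const (1:ℝ)).indicator hθ1meas) ((integrable_const (1:ℝ)).indicator hθmmeas),
      integral_indicator_const _ hθ1meas, integral_indicator_const _ hθmmeas, measureReal_def, hθp, measureReal_def, hθm]
    simp
  -- conditional expectation of θ-measurable functions given ℱ 1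
  have hindep' : ProbabilityTheory.Indep
      (MeasurableSpace.comap θ Real.measurableSpace)
      (MeasurableSpace.comap U Real.measurableSpace) P :=
    ((ProbabilityTheory.IndepFun_iff_Indep U θ P).1 hindep).symm
  have hcond1 : ∀ W : Ω → ℝ,
      StronglyMeasurable[MeasurableSpace.comap θ Real.measurableSpace] W →
      P[W|ℱ 1] =ᵐ[P] fun _ => ∫ ω, W ω ∂P := by
    intro W hW
    rw [hF1]
    exact condExp_indep_eq hθ.comap_le hU.comap_le hW hindep'
  have hEθ1 : P[θ|ℱ 1] =ᵐ[P] fun _ => (0:ℝ) :=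
    (hcond1 θ ((comap_measurable θ).stronglyMeasurable)).trans (by rw [hEθ])
  -- indicators of θ = ±1
  set ind1 : Ω → ℝ := {ω | θ ω = 1}.indicator (fun _ => (1:ℝ)) with hind1_def
  set indm : Ω → ℝ := {ω | θ ω = -1}.indicator (fun _ => (1:ℝ)) with hindm_def
  have hind1_int : Integrable ind1 P := (integrable_const 1).indicator hθ1meas
  have hindm_int : Integrable indm P := (integrable_const 1).indicator hθmmeas
  have hEind1 : P[ind1|ℱ 1] =ᵐ[P] fun _ => (1/2:ℝ) := by
    refine (hcond1 ind1 (stronglyMeasurable_const.indicator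
      ⟨{1}, measurableSet_singleton 1, rfl⟩)).trans ?_
    rw [hind1_def, integral_indicator_const _ hθ1meas, measureReal_def, hθp]
    norm_num
  have hEindm : P[indm|ℱ 1] =ᵐ[P] fun _ => (1/2:ℝ) := by
    refine (hcond1 indm (stronglyMeasurable_const.indicator
      ⟨{-1}, measurableSet_singleton (-1), rfl⟩)).trans ?_
    rw [hindm_def, integral_indicator_const _ hθmmeas, measureReal_def, hθm]
    norm_num
  -- pull-out lemma for ℱ 1
  have hsplit : ∀ (f g : Ω → ℝ) (C : ℝ), Measurable[ℱ 1] f → Measurable[ℱ 1] g →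
      (∀ ω, ‖f ω‖ ≤ C) → (∀ ω, ‖g ω‖ ≤ C) →
      P[f * ind1 + g * indm|ℱ 1] =ᵐ[P] fun ω => (f ω + g ω) / 2 := by
    intro f g C hf hg hfb hgb
    have hfm0 := hf.mono (ℱ.le 1) le_rfl
    have hgm0 := hg.mono (ℱ.le 1) le_rfl
    have h1 : Integrable (f * ind1) P :=
      hind1_int.bdd_mul hfm0.aestronglyMeasurable (Eventually.of_forall hfb)
    have h2 : Integrable (g * indm) P :=
      hindm_int.bdd_mul hgm0.aestronglyMeasurable (Eventually.of_forall hgb)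
    have e1 := condExp_stronglyMeasurable_mul_of_bound (ℱ.le 1) hf.stronglyMeasurable
      hind1_int C (Eventually.of_forall hfb)
    have e2 := condExp_stronglyMeasurable_mul_of_bound (ℱ.le 1) hg.stronglyMeasurable
      hindm_int C (Eventually.of_forall hgb)
    refine (condExp_add h1 h2 _).trans ?_
    filter_upwards [e1, e2, hEind1, hEindm] with ω he1 he2 hi1 him
    simp only [Pi.add_apply, he1, he2, Pi.mul_apply, hi1, him]
    ring
  -- key conditional-expectation computation at time 1
  set av : Ω → ℝ := fun ω => sfun ω + (U ω)⁻¹ with hav_def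
  set bv : Ω → ℝ := fun ω => sfun ω - (U ω)⁻¹ with hbv_def
  have hav1 : Measurable[ℱ 1] av := hsfun1.add hUm1.inv
  have hbv1 : Measurable[ℱ 1] bv := hsfun1.sub hUm1.inv
  have hkey : ∀ F : ℝ → ℝ, Measurable F → (∀ x, 0 ≤ F x) →
      ∀ k : ℕ, (P[fun ω' => min (F (S' 2 ω')) (k:ℝ)|ℱ 1]) =ᵐ[P]
        fun ω => (min (F (av ω)) (k:ℝ) + min (F (bv ω)) (k:ℝ)) / 2 := by
    intro F hF hF0 k
    have hbound : ∀ (w : Ω → ℝ), (∀ ω, ‖min (F (w ω)) (k:ℝ)‖ ≤ (k:ℝ)) := by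
      intro w ω
      rw [Real.norm_eq_abs, abs_le]
      constructor
      · have h1 : (0:ℝ) ≤ k := Nat.cast_nonneg k
        have h2 : (0:ℝ) ≤ min (F (w ω)) (k:ℝ) := le_min (hF0 (w ω)) h1
        linarith
      · exact min_le_right _ _
    have hae : (fun ω' => min (F (S' 2 ω')) (k:ℝ)) =ᵐ[P]
        ((fun ω => min (F (av ω)) (k:ℝ)) * ind1 + (fun ω => min (F (bv ω)) (k:ℝ)) * indm) := by
      filter_upwards [hθae] with ω hω
      rcases hω with h | h
      · have hmem : ω ∈ {ω | θ ω = 1} := h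
        have hnmem : ω ∉ {ω | θ ω = -1} := by simp only [mem_setOf_eq, h]; norm_num
        simp only [Pi.add_apply, Pi.mul_apply, hind1_def, hindm_def,
          Set.indicator_of_mem hmem, Set.indicator_of_notMem hnmem, mul_one, mul_zero, add_zero]
        rw [hSt 2 le_rfl ω, h, hav_def]
        norm_num
      · have hmem : ω ∈ {ω | θ ω = -1} := h
        have hnmem : ω ∉ {ω | θ ω = 1} := by simp only [mem_setOf_eq, h]; norm_num
        simp only [Pi.add_apply, Pi.mul_apply, hind1_def, hindm_def,
          Set.indicator_of_mem hmem, Set.indicator_of_notMem hnmem, mul_one, mul_zero, zero_add]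
        rw [hSt 2 le_rfl ω, h, hbv_def]
        norm_num [sub_eq_add_neg, neg_div]
    refine (condExp_congr_ae hae).trans ?_
    exact hsplit _ _ (k:ℝ) ((hF.comp hav1).min measurable_const)
      ((hF.comp hbv1).min measurable_const) (hbound av) (hbound bv)
  -- conditional expectation given the trivial σ-algebra
  have ht0_cond : ∀ f : Ω → ℝ, P[f|ℱ 0] = fun _ => ∫ ω, f ω ∂P := by
    intro f; rw [hF0]; exact condExp_bot f
  -- measurability with respect to ℱ t, t ≥ 2
  have hUs : Measurable[MeasurableSpace.comap U Real.measurableSpace ⊔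
      MeasurableSpace.comap θ Real.measurableSpace] U :=
    (comap_measurable U).mono le_sup_left le_rfl
  have hθs : Measurable[MeasurableSpace.comap U Real.measurableSpace ⊔
      MeasurableSpace.comap θ Real.measurableSpace] θ :=
    (comap_measurable θ).mono le_sup_right le_rfl
  have hsfun_sup : Measurable[MeasurableSpace.comap U Real.measurableSpace ⊔
      MeasurableSpace.comap θ Real.measurableSpace] sfun :=
    hsfun1.mono (by rw [hF1]; exact le_sup_left) le_rfl
  have hSmeas_t : ∀ t, 2 ≤ t → Measurable[ℱ t] (S' t) := by
    intro t ht
    have he : S' t = fun ω => sfun ω + θ ω / U ω := funext (hSt t ht)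
    rw [he, hFt t ht]
    exact hsfun_sup.add (hθs.div hUs)
  have hbd_int : ∀ (f : Ω → ℝ) (C : ℝ), AEStronglyMeasurable f P → (∀ ω, ‖f ω‖ ≤ C) →
      Integrable f P := by
    intro f C hf hC
    exact Integrable.mono' (integrable_const C) hf (Eventually.of_forall hC)
  have hcondt : ∀ t (f : Ω → ℝ), StronglyMeasurable[ℱ t] f → Integrable f P →
      P[f|ℱ t] = f := by
    intro t f hf hi
    exact condExp_of_stronglyMeasurable (ℱ.le t) hf hi
  -- pointwise identities for S' 1
  have habs_pt : ∀ ω, |S' 1 ω| = ({ω | 1/2 < U ω}).indicator (fun _ => (1:ℝ)) ω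
      + ({ω | U ω < 1/2}).indicator (fun _ => (1:ℝ)) ω := by
    intro ω
    rw [hS1]
    simp only [hsfun_def, Set.indicator_apply, mem_setOf_eq]
    split_ifs with h1 h2 h2
    · linarith
    · norm_num
    · rw [zero_sub, abs_neg, abs_one]; norm_num
    · norm_num
  have hpos_pt : ∀ ω, max (S' 1 ω) 0 = ({ω | 1/2 < U ω}).indicator (fun _ => (1:ℝ)) ω := by
    intro ω
    rw [hS1]
    simp only [hsfun_def, Set.indicator_apply, mem_setOf_eq]
    split_ifs with h1 h2 h2
    · linarith
    · norm_num
    · norm_num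
    · norm_num
  have hneg_pt : ∀ ω, max (-(S' 1 ω)) 0 = ({ω | U ω < 1/2}).indicator (fun _ => (1:ℝ)) ω := by
    intro ω
    rw [hS1]
    simp only [hsfun_def, Set.indicator_apply, mem_setOf_eq]
    split_ifs with h1 h2 h2
    · linarith
    · norm_num
    · norm_num
    · norm_num
  have hS1bd : ∀ ω, |S' 1 ω| ≤ 1 := fun ω => by rw [hS1]; exact hsfun_abs ω
  -- integrals of truncations at time 0
  have hint_trunc : ∀ (Y : Ω → ℝ) (c : ℝ), (∀ ω, 0 ≤ Y ω) → (∀ ω, Y ω ≤ 1) →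
      (∫ ω, Y ω ∂P = c) → ∀ k : ℕ, ∫ ω, min (Y ω) (k:ℝ) ∂P = if k = 0 then 0 else c := by
    intro Y c hY0 hY1 hYc k
    rcases Nat.eq_zero_or_pos k with hk | hk
    · subst hk
      have h : ∀ ω, min (Y ω) ((0:ℕ):ℝ) = 0 := fun ω => by
        rw [Nat.cast_zero]; exact min_eq_right (hY0 ω)
      simp only [h]
      simp
    · rw [if_neg (Nat.pos_iff_ne_zero.mp hk)]
      have hk1 : (1:ℝ) ≤ k := by exact_mod_cast hk
      have h : ∀ ω, min (Y ω) ((k:ℕ):ℝ) = Y ω := fun ω =>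
        min_eq_left ((hY1 ω).trans hk1)
      simp only [h]
      exact hYc
  have hintA : ∫ ω, ({ω | 1/2 < U ω}).indicator (fun _ => (1:ℝ)) ω ∂P = 1/2 := by
    rw [integral_indicator_const _ ((ℱ.le 1) _ hA1), measureReal_def, hPA]
    norm_num
  have hintB : ∫ ω, ({ω | U ω < 1/2}).indicator (fun _ => (1:ℝ)) ω ∂P = 1/2 := by
    rw [integral_indicator_const _ ((ℱ.le 1) _ hB1), measureReal_def, hPB]
    norm_num
  have hint_pos0 : ∀ k : ℕ, ∫ ω, min (max (S' 1 ω) 0) (k:ℝ) ∂P = if k = 0 then 0 else 1/2 := by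
    refine hint_trunc _ _ (fun ω => le_max_right _ _) (fun ω => ?_) ?_
    · exact max_le ((le_abs_self _).trans (hS1bd ω)) zero_le_one
    · calc ∫ ω, max (S' 1 ω) 0 ∂P
          = ∫ ω, ({ω | 1/2 < U ω}).indicator (fun _ => (1:ℝ)) ω ∂P := by
            exact integral_congr_ae (Eventually.of_forall hpos_pt)
        _ = 1/2 := hintA
  have hint_neg0 : ∀ k : ℕ, ∫ ω, min (max (-(S' 1 ω)) 0) (k:ℝ) ∂P = if k = 0 then 0 else 1/2 := by
    refine hint_trunc _ _ (fun ω => le_max_right _ _) (fun ω => ?_) ?_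
    · have h := hS1bd ω
      rw [abs_le] at h
      exact max_le (by linarith [h.1]) zero_le_one
    · calc ∫ ω, max (-(S' 1 ω)) 0 ∂P
          = ∫ ω, ({ω | U ω < 1/2}).indicator (fun _ => (1:ℝ)) ω ∂P := by
            exact integral_congr_ae (Eventually.of_forall hneg_pt)
        _ = 1/2 := hintB
  have hint_abs0 : ∀ k : ℕ, ∫ ω, min (|S' 1 ω|) (k:ℝ) ∂P = if k = 0 then 0 else 1 := by
    refine hint_trunc _ _ (fun ω => abs_nonneg _) hS1bd ?_
    calc ∫ ω, |S' 1 ω| ∂P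
        = ∫ ω, (({ω | 1/2 < U ω}).indicator (fun _ => (1:ℝ)) ω
            + ({ω | U ω < 1/2}).indicator (fun _ => (1:ℝ)) ω) ∂P :=
          integral_congr_ae (Eventually.of_forall habs_pt)
      _ = 1/2 + 1/2 := by
          rw [integral_add ((integrable_const (1:ℝ)).indicator ((ℱ.le 1) _ hA1))
            ((integrable_const (1:ℝ)).indicator ((ℱ.le 1) _ hB1)), hintA, hintB]
      _ = 1 := by norm_num
  have hsup_ind : ∀ c : ℝ, 0 ≤ c →
      (⨆ k : ℕ, ENNReal.ofReal (if k = 0 then (0:ℝ) else c)) = ENNReal.ofReal c := by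
    intro c hc
    apply le_antisymm
    · refine iSup_le fun k => ?_
      split_ifs
      · simp
      · exact le_rfl
    · refine le_iSup_of_le 1 ?_
      norm_num
  have hgce0 : ∀ (Y : Ω → ℝ) (c : ℝ), 0 ≤ c →
      (∀ k : ℕ, ∫ ω, min (Y ω) (k:ℝ) ∂P = if k = 0 then 0 else c) →
      ∀ ω, gce (ℱ 0) P Y ω = ENNReal.ofReal c := by
    intro Y c hc hint ω
    simp only [gce, ht0_cond]
    simp only [hint]
    exact hsup_ind c hc
  have hgce2 : ∀ t, 2 ≤ t → ∀ F : ℝ → ℝ, Measurable F → (∀ x, 0 ≤ F x) →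
      ∀ ω, gce (ℱ t) P (fun ω' => F (S' t ω')) ω = ENNReal.ofReal (F (S' t ω)) := by
    intro t ht F hF hF0 ω
    simp only [gce]
    have hcut : ∀ k : ℕ, P[fun ω' => min (F (S' t ω')) (k:ℝ)|ℱ t] =
        fun ω' => min (F (S' t ω')) (k:ℝ) := by
      intro k
      have hm : Measurable[ℱ t] fun ω' => min (F (S' t ω')) (k:ℝ) :=
        (hF.comp (hSmeas_t t ht)).min measurable_const
      refine hcondt t _ hm.stronglyMeasurable
        (hbd_int _ (k:ℝ) (hm.mono (ℱ.le t) le_rfl).aestronglyMeasurable fun ω' => ?_)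
      rw [Real.norm_eq_abs, abs_le]
      constructor
      · have h2 : (0:ℝ) ≤ min (F (S' t ω')) (k:ℝ) := le_min (hF0 _) (Nat.cast_nonneg k)
        have h3 : (0:ℝ) ≤ (k:ℝ) := Nat.cast_nonneg k
        linarith
      · exact min_le_right _ _
    simp only [hcut]
    exact iSup_ofReal_min _
  -- the generalized-martingale property
  have hgenmart : ∀ t : ℕ,
      (∀ᵐ ω ∂P, gce (ℱ t) P (fun ω' => |S' (t + 1) ω'|) ω < ⊤) ∧
      (∀ᵐ ω ∂P, gcondexp (ℱ t) P (S' (t + 1)) ω = S' t ω) := by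
    intro t
    match t with
    | 0 =>
      constructor
      · refine Eventually.of_forall fun ω => ?_
        rw [hgce0 (fun ω' => |S' 1 ω'|) 1 zero_le_one hint_abs0 ω]
        exact ofReal_lt_top
      · refine Eventually.of_forall fun ω => ?_
        simp only [gcondexp]
        rw [hgce0 (fun ω' => max (S' 1 ω') 0) (1/2) (by norm_num) hint_pos0 ω,
          hgce0 (fun ω' => max (-(S' 1 ω')) 0) (1/2) (by norm_num) hint_neg0 ω,
          ENNReal.toReal_ofReal (by norm_num), hS0 ω]
        ring
    | 1 =>
      have habs : (fun ω => gce (ℱ 1) P (fun ω' => |S' 2 ω'|) ω) =ᵐ[P]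
          fun ω => ENNReal.ofReal ((|av ω| + |bv ω|) / 2) :=
        gce_ae_eq (hkey _ measurable_abs fun x => abs_nonneg x) fun ω => iSup_ofReal_min2 _ _
      have hpos : (fun ω => gce (ℱ 1) P (fun ω' => max (S' 2 ω') 0) ω) =ᵐ[P]
          fun ω => ENNReal.ofReal ((max (av ω) 0 + max (bv ω) 0) / 2) :=
        gce_ae_eq (hkey (fun x => max x 0) (measurable_id.max measurable_const)
          fun x => le_max_right _ _) fun ω => iSup_ofReal_min2 _ _
      have hneg : (fun ω => gce (ℱ 1) P (fun ω' => max (-(S' 2 ω')) 0) ω) =ᵐ[P]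
          fun ω => ENNReal.ofReal ((max (-(av ω)) 0 + max (-(bv ω)) 0) / 2) :=
        gce_ae_eq (hkey (fun x => max (-x) 0) (measurable_neg.max measurable_const)
          fun x => le_max_right _ _) fun ω => iSup_ofReal_min2 _ _
      constructor
      · filter_upwards [habs] with ω hω
        rw [hω]
        exact ofReal_lt_top
      · filter_upwards [hpos, hneg] with ω h1 h2
        simp only [gcondexp]
        rw [h1, h2, ENNReal.toReal_ofReal (by positivity), ENNReal.toReal_ofReal (by positivity)]
        have e1 := max_zero_sub_max_neg_zero_eq_self (av ω)
        have e2 := max_zero_sub_max_neg_zero_eq_self (bv ω)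
        have e3 : av ω + bv ω = 2 * sfun ω := by rw [hav_def, hbv_def]; ring
        rw [hS1]
        have e4 : (max (av ω) 0 + max (bv ω) 0) / 2 - (max (-(av ω)) 0 + max (-(bv ω)) 0) / 2
            = ((max (av ω) 0 - max (-(av ω)) 0) + (max (bv ω) 0 - max (-(bv ω)) 0)) / 2 := by
          ring
        rw [e4, e1, e2, e3]
        ring
    | (n+2) =>
      have ht : 2 ≤ n + 2 := by omega
      have hstep : S' (n + 2 + 1) = S' (n + 2) := by
        funext ω
        rw [hSt (n+2+1) (by omega) ω, hSt (n+2) ht ω]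
      constructor
      · refine Eventually.of_forall fun ω => ?_
        rw [hstep]
        have h : gce (ℱ (n+2)) P (fun ω' => |S' (n+2) ω'|) ω = ENNReal.ofReal (|S' (n+2) ω|) :=
          hgce2 (n+2) ht _ measurable_abs (fun x => abs_nonneg x) ω
        rw [h]
        exact ofReal_lt_top
      · refine Eventually.of_forall fun ω => ?_
        simp only [gcondexp]
        rw [hstep]
        have h1 : gce (ℱ (n+2)) P (fun ω' => max (S' (n+2) ω') 0) ω
            = ENNReal.ofReal (max (S' (n+2) ω) 0) :=
          hgce2 (n+2) ht (fun x => max x 0) (measurable_id.max measurable_const)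
            (fun x => le_max_right _ _) ω
        have h2 : gce (ℱ (n+2)) P (fun ω' => max (-(S' (n+2) ω')) 0) ω
            = ENNReal.ofReal (max (-(S' (n+2) ω)) 0) :=
          hgce2 (n+2) ht (fun x => max (-x) 0) (measurable_neg.max measurable_const)
            (fun x => le_max_right _ _) ω
        rw [h1, h2, ENNReal.toReal_ofReal (le_max_right _ _),
          ENNReal.toReal_ofReal (le_max_right _ _)]
        exact max_zero_sub_max_neg_zero_eq_self _
  -- the integral computations
  set g : ℝ → ℝ := fun u => 2*u*((if 1/2 < u then (1:ℝ) else 0) - (if u < 1/2 then 1 else 0))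
    with hg_def
  have hgmeas : Measurable g := by
    rw [hg_def]
    exact (measurable_const.mul measurable_id).mul
      ((measurable_const.ite measurableSet_Ioi measurable_const).sub
        (measurable_const.ite measurableSet_Iio measurable_const))
  have hZS1 : (fun ω => Z 1 ω * S' 1 ω) = fun ω => g (U ω) := by
    funext ω
    rw [hZdef, hS1, hsfun_def, hg_def]
    norm_num
  have hint1 : ∫ ω, Z 1 ω * S' 1 ω ∂P = 1/2 := by
    rw [hZS1, ← integral_map hU.aemeasurable hgmeas.aestronglyMeasurable, hUlaw]
    have hae : g =ᵐ[volume.restrict (Icc (0:ℝ) 1)]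
        fun u => 2*u - (Iio ((1:ℝ)/2)).indicator (fun u => 4*u) u := by
      have hsub : {u : ℝ | ¬ g u = 2*u - (Iio ((1:ℝ)/2)).indicator (fun u => 4*u) u}
          ⊆ {(1:ℝ)/2} := by
        intro u hu
        simp only [mem_setOf_eq] at hu
        by_contra hne
        apply hu
        rcases lt_trichotomy u (1/2) with h | h | h
        · rw [hg_def]
          simp only [Set.indicator_of_mem (by exact h : u ∈ Iio ((1:ℝ)/2))]
          rw [if_neg (by linarith), if_pos h]
          ring
        · exact absurd h hne
        · simp only [hg_def]
          rw [Set.indicator_of_notMem (by intro hm; rw [mem_Iio] at hm; linarith)]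
          rw [if_pos h, if_neg (by linarith)]
          ring
      refine (ae_iff).2 (measure_mono_null hsub ?_)
      rw [Measure.restrict_apply (measurableSet_singleton _)]
      exact measure_mono_null inter_subset_left Real.volume_singleton
    have hi2u : IntegrableOn (fun u : ℝ => 2*u) (Icc 0 1) volume :=
      (continuous_const.mul continuous_id).integrableOn_Icc
    have hi4u : IntegrableOn (fun u : ℝ => 4*u) (Icc 0 1) volume :=
      (continuous_const.mul continuous_id).integrableOn_Icc
    rw [integral_congr_ae hae, integral_sub hi2u (hi4u.indicator measurableSet_Iio)]
    have h2u : ∫ u in Icc (0:ℝ) 1, 2*u = 1 := by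
      rw [integral_Icc_eq_integral_Ioc,
        ← intervalIntegral.integral_of_le (by norm_num : (0:ℝ) ≤ 1),
        intervalIntegral.integral_const_mul, integral_id]
      norm_num
    have h4u : ∫ u in Icc (0:ℝ) 1, (Iio ((1:ℝ)/2)).indicator (fun u => 4*u) u = 1/2 := by
      rw [setIntegral_indicator measurableSet_Iio]
      have hset : Icc (0:ℝ) 1 ∩ Iio (1/2) = Ico 0 (1/2) := by
        ext x
        simp only [mem_inter_iff, mem_Icc, mem_Iio, mem_Ico]
        constructor <;> intro h
        · exact ⟨h.1.1, h.2⟩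
        · exact ⟨⟨h.1, by linarith [h.2]⟩, h.2⟩
      rw [hset, integral_Ico_eq_integral_Ioo, ← integral_Ioc_eq_integral_Ioo,
        ← intervalIntegral.integral_of_le (by norm_num : (0:ℝ) ≤ 1/2),
        intervalIntegral.integral_const_mul, integral_id]
      norm_num
    rw [h2u, h4u]
    norm_num
  have hint0 : ∫ ω, Z 0 ω * S' 0 ω ∂P = 0 := by
    have h : (fun ω => Z 0 ω * S' 0 ω) = fun _ => (0:ℝ) := by
      funext ω
      rw [hZdef, hS0]
      ring
    rw [h, integral_const]
    simp
  have hnotmart : ¬ Martingale (fun t ω => Z t ω * S' t ω) ℱ P := by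
    intro hM
    have h := hM.setIntegral_eq (zero_le_one) (MeasurableSet.univ (α := Ω))
    rw [Measure.restrict_univ] at h
    rw [hint0, hint1] at h
    norm_num at h
  -- local martingale: adaptedness
  have hadapted : StronglyAdapted ℱ S' := by
    intro t
    match t with
    | 0 =>
      have h : S' 0 = fun _ => (0:ℝ) := funext hS0
      rw [h]; exact stronglyMeasurable_const
    | 1 =>
      have h : S' 1 = sfun := funext hS1
      rw [h]; exact hsfun1.stronglyMeasurable
    | (n+2) => exact (hSmeas_t (n+2) (by omega)).stronglyMeasurable
  -- the stopping times
  set τ : ℕ → Ω → ℕ∞ := fun n ω => if ((n:ℝ)+1)⁻¹ < U ω then (⊤:ℕ∞) else 1 with hτ_def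
  have hτ_pos : ∀ n ω, 0 < τ n ω := by
    intro n ω
    simp only [hτ_def]
    split_ifs
    · exact lt_of_lt_of_le zero_lt_one le_top
    · exact zero_lt_one
  have hτ_stop : ∀ n, IsStoppingTimeE ℱ (τ n) := by
    intro n m
    match m with
    | 0 =>
      have h : {ω | τ n ω ≤ ((0:ℕ):ℕ∞)} = ∅ := by
        ext ω
        simp only [mem_setOf_eq, Nat.cast_zero, nonpos_iff_eq_zero, mem_empty_iff_false,
          iff_false]
        exact (hτ_pos n ω).ne'
      rw [h]
      exact @MeasurableSet.empty _ (ℱ 0)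
    | (m+1) =>
      have h : {ω | τ n ω ≤ ((m+1:ℕ):ℕ∞)} = U ⁻¹' (Iic ((n:ℝ)+1)⁻¹) := by
        ext ω
        simp only [mem_setOf_eq, hτ_def, mem_preimage, mem_Iic]
        split_ifs with hc
        · constructor
          · intro hle
            exact absurd (top_le_iff.1 hle) (ENat.coe_ne_top (m+1))
          · intro hle
            linarith
        · constructor
          · intro _
            exact not_lt.1 hc
          · intro _
            exact_mod_cast Nat.succ_le_succ (Nat.zero_le m)
      rw [h]
      exact ℱ.mono (by omega : 1 ≤ m+1) _ (hUm1 measurableSet_Iic)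
  have hτ_tendsto : ∀ᵐ ω ∂P, ∀ M : ℕ, ∀ᶠ n in atTop, (M:ℕ∞) ≤ τ n ω := by
    filter_upwards [hUpos] with ω hω M
    obtain ⟨N, hN⟩ := exists_nat_one_div_lt hω
    refine eventually_atTop.2 ⟨N, fun n hn => ?_⟩
    have hNn : ((N:ℝ)+1) ≤ ((n:ℝ)+1) := by exact_mod_cast Nat.succ_le_succ hn
    have h1 : ((n:ℝ)+1)⁻¹ ≤ ((N:ℝ)+1)⁻¹ := inv_anti₀ (by positivity) hNn
    have h2 : ((n:ℝ)+1)⁻¹ < U ω := lt_of_le_of_lt h1 (by rwa [one_div] at hN)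
    simp only [hτ_def, if_pos h2]
    exact le_top
  -- the stopped processes
  have hstopped : ∀ n, stoppedAt S' (τ n) = fun t ω =>
      if t = 0 then 0 else sfun ω + if 2 ≤ t ∧ ((n:ℝ)+1)⁻¹ < U ω then θ ω / U ω else 0 := by
    intro n
    funext t ω
    simp only [stoppedAt, if_pos (hτ_pos n ω)]
    by_cases hu : ((n:ℝ)+1)⁻¹ < U ω
    · have hτω : τ n ω = ⊤ := by simp only [hτ_def]; exact if_pos hu
      rw [hτω, min_eq_left (le_top : (t:ℕ∞) ≤ ⊤), ENat.toNat_coe]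
      match t with
      | 0 => simp [hS0]
      | 1 =>
        rw [hS1]
        norm_num
      | (m+2) =>
        rw [hSt (m+2) (by omega)]
        rw [if_neg (by omega), if_pos ⟨by omega, hu⟩]
    · have hτω : τ n ω = 1 := by simp only [hτ_def]; exact if_neg hu
      rw [hτω]
      match t with
      | 0 =>
        have hmin : min ((0:ℕ):ℕ∞) 1 = ((0:ℕ):ℕ∞) := min_eq_left (by exact_mod_cast Nat.zero_le 1)
        rw [hmin, ENat.toNat_coe]
        simp [hS0]
      | (m+1) =>
        have hmin : min ((m+1:ℕ):ℕ∞) 1 = ((1:ℕ):ℕ∞) :=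
          min_eq_right (by exact_mod_cast Nat.succ_le_succ (Nat.zero_le m))
        rw [hmin, ENat.toNat_coe, hS1]
        rw [if_neg (Nat.succ_ne_zero m), if_neg (fun hc => hu hc.2)]
        ring
  -- the stopped processes are martingales
  have hsfun_int : Integrable sfun P :=
    hbd_int sfun 1 hsfun_m0.aestronglyMeasurable fun ω => by
      rw [Real.norm_eq_abs]; exact hsfun_abs ω
  have hEsfun : ∫ ω, sfun ω ∂P = 0 := by
    have h : sfun = fun ω => ({ω | 1/2 < U ω}).indicator (fun _ => (1:ℝ)) ω
        - ({ω | U ω < 1/2}).indicator (fun _ => (1:ℝ)) ω := by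
      funext ω
      simp only [hsfun_def, Set.indicator_apply, mem_setOf_eq]
    rw [h, integral_sub ((integrable_const (1:ℝ)).indicator ((ℱ.le 1) _ hA1))
      ((integrable_const (1:ℝ)).indicator ((ℱ.le 1) _ hB1)), hintA, hintB]
    norm_num
  have hmart : ∀ n, Martingale (stoppedAt S' (τ n)) ℱ P := by
    intro n
    rw [hstopped n]
    set c : ℝ := ((n:ℝ)+1)⁻¹ with hc_def
    have hc : 0 < c := by rw [hc_def]; positivity
    set X : ℕ → Ω → ℝ := fun t ω =>
      if t = 0 then 0 else sfun ω + if 2 ≤ t ∧ c < U ω then θ ω / U ω else 0 with hX_def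
    have hX0 : X 0 = fun _ => (0:ℝ) := by funext ω; simp [hX_def]
    have hX1 : X 1 = sfun := by
      funext ω
      simp only [hX_def]
      norm_num
    have hXt2 : ∀ t, 2 ≤ t → X t = fun ω => sfun ω + if c < U ω then θ ω / U ω else 0 := by
      intro t ht
      funext ω
      simp only [hX_def, if_neg (by omega : ¬ t = 0)]
      by_cases hu : c < U ω
      · rw [if_pos ⟨ht, hu⟩, if_pos hu]
      · rw [if_neg (fun hc' => hu hc'.2), if_neg hu]
    have hXadp : StronglyAdapted ℱ X := by
      intro t
      match t with
      | 0 => rw [hX0]; exact stronglyMeasurable_const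
      | 1 => rw [hX1]; exact hsfun1.stronglyMeasurable
      | (m+2) =>
        rw [hXt2 (m+2) (by omega), hFt (m+2) (by omega)]
        exact (hsfun_sup.add
          (Measurable.ite (hUs measurableSet_Ioi) (hθs.div hUs) measurable_const)).stronglyMeasurable
    have hXbound : ∀ t ω, ‖X t ω‖ ≤ 1 + ((n:ℝ)+1) * ‖θ ω‖ := by
      intro t ω
      have hθn : (0:ℝ) ≤ ((n:ℝ)+1) * ‖θ ω‖ := by positivity
      simp only [hX_def]
      split_ifs with h1 h2
      · simpa using (by linarith : (0:ℝ) ≤ 1 + ((n:ℝ)+1) * ‖θ ω‖)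
      · have hu : c < U ω := h2.2
        have hU0 : 0 < U ω := lt_trans hc hu
        have hinv : (U ω)⁻¹ < ((n:ℝ)+1) := by
          have := inv_strictAnti₀ hc hu
          rwa [hc_def, inv_inv] at this
        have habs : ‖θ ω / U ω‖ ≤ ((n:ℝ)+1) * ‖θ ω‖ := by
          rw [Real.norm_eq_abs, abs_div, abs_of_pos hU0, div_eq_mul_inv, Real.norm_eq_abs]
          calc |θ ω| * (U ω)⁻¹ ≤ |θ ω| * ((n:ℝ)+1) :=
                mul_le_mul_of_nonneg_left hinv.le (abs_nonneg _)
            _ = ((n:ℝ)+1) * |θ ω| := mul_comm _ _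
        calc ‖sfun ω + θ ω / U ω‖ ≤ ‖sfun ω‖ + ‖θ ω / U ω‖ := norm_add_le _ _
          _ ≤ 1 + ((n:ℝ)+1) * ‖θ ω‖ := by
              refine add_le_add ?_ habs
              rw [Real.norm_eq_abs]; exact hsfun_abs ω
      · rw [add_zero, Real.norm_eq_abs]
        have := hsfun_abs ω
        linarith
    have hXint' : Integrable (fun ω => 1 + ((n:ℝ)+1) * ‖θ ω‖) P :=
      (integrable_const (1:ℝ)).add (hθint.norm.const_mul _)
    have hXint2 : ∀ t, Integrable (X t) P := fun t =>
      Integrable.mono' hXint' ((hXadp t).mono (ℱ.le t)).aestronglyMeasurable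
        (Eventually.of_forall (hXbound t))
    refine martingale_nat hXadp hXint2 ?_
    intro i
    match i with
    | 0 =>
      rw [ht0_cond (X 1), hX1, hEsfun, hX0]
    | 1 =>
      set hfun : Ω → ℝ := fun ω => if c < U ω then (U ω)⁻¹ else 0 with hh_def
      have hX2 : X 2 = sfun + hfun * θ := by
        funext ω
        simp only [hX_def, Pi.add_apply, Pi.mul_apply, hh_def]
        by_cases hu : c < U ω
        · rw [if_neg (by omega : ¬ (2:ℕ) = 0), if_pos ⟨le_rfl, hu⟩, if_pos hu,
            div_eq_mul_inv, mul_comm]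
        · rw [if_neg (by omega : ¬ (2:ℕ) = 0), if_neg (fun hc' => hu hc'.2), if_neg hu]
          ring
      have hh1 : Measurable[ℱ 1] hfun :=
        Measurable.ite (hUm1 measurableSet_Ioi) hUm1.inv measurable_const
      have hhb : ∀ ω, ‖hfun ω‖ ≤ (n:ℝ)+1 := by
        intro ω
        simp only [hh_def]
        split_ifs with hu
        · have hU0 : 0 < U ω := lt_trans hc hu
          have hinv : (U ω)⁻¹ < ((n:ℝ)+1) := by
            have := inv_strictAnti₀ hc hu
            rwa [hc_def, inv_inv] at this
          rw [Real.norm_eq_abs, abs_of_pos (inv_pos.2 hU0)]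
          exact hinv.le
        · simp; positivity
      have hhθint : Integrable (hfun * θ) P :=
        hθint.bdd_mul (hh1.mono (ℱ.le 1) le_rfl).aestronglyMeasurable
          (Eventually.of_forall hhb)
      have e1 : P[X 2|ℱ 1] =ᵐ[P] P[sfun|ℱ 1] + P[hfun * θ|ℱ 1] := by
        rw [hX2]; exact condExp_add hsfun_int hhθint _
      have e2 : P[sfun|ℱ 1] = sfun := hcondt 1 sfun hsfun1.stronglyMeasurable hsfun_int
      have e3 : P[hfun * θ|ℱ 1] =ᵐ[P] hfun * P[θ|ℱ 1] :=
        condExp_stronglyMeasurable_mul_of_bound (ℱ.le 1) hh1.stronglyMeasurable hθint _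
          (Eventually.of_forall hhb)
      rw [hX1]
      filter_upwards [e1, e3, hEθ1] with ω a1 a3 aθ
      rw [a1]
      simp only [Pi.add_apply, Pi.mul_apply]
      rw [congrFun e2 ω, a3]
      simp only [Pi.mul_apply, aθ]
      ring
    | (m+2) =>
      have hXeq : X (m+2+1) = X (m+2) := by
        rw [hXt2 (m+2+1) (by omega), hXt2 (m+2) (by omega)]
      rw [hXeq, hcondt (m+2) (X (m+2)) (hXadp (m+2)) (hXint2 (m+2))]
  exact ⟨⟨hadapted, τ, hτ_stop, hτ_tendsto, hmart⟩, hgenmart, hint1, hint0, hnotmart⟩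






end
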